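/- arXiv:2310.09184 — 3 statements merged into one kernel-verified Lean document; each statement's English description precedes it below -/
import Mathlib

section
/- Let T and T' be distinct binary trees with n leaves each. Let i be the greatest index such that rd_T(i) ≠ rd_{T'}(i). Then ld_T(i) = ld_{T'}(i). -/
/-- Binary trees: every internal vertex has exactly a left and a right child. -/
inductive BTree : Type where
  | leaf : BTree
  | node : BTree → BTree → BTree

namespace BTree

/-- Number of leaves. -/
def numLeaves : BTree → ℕ
  | leaf => 1
  | node l r => l.numLeaves + r.numLeaves

/-- Addresses of the leaves in left-to-right order, as words over `{0,1}`;
`false` records a left step (0) and `true` a right step (1). -/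
def addrs : BTree → List (List Bool)
  | leaf => [[]]
  | node l r => (l.addrs.map (fun w => false :: w)) ++ (r.addrs.map (fun w => true :: w))

/-- Address of the `i`-th leaf (0-indexed, left to right). -/
def addr (T : BTree) (i : ℕ) : List Bool := T.addrs.getD i []

/-- Left depth of the `i`-th leaf: number of left steps (0's) in its address. -/
def ld (T : BTree) (i : ℕ) : ℕ := (T.addr i).count false

/-- Right depth of the `i`-th leaf: number of right steps (1's) in its address. -/
def rd (T : BTree) (i : ℕ) : ℕ := (T.addr i).count true

/-- Total depth of the `i`-th leaf. -/
def depth (T : BTree) (i : ℕ) : ℕ := (T.addr i).length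

lemma numLeaves_pos (T : BTree) : 0 < T.numLeaves := by
  induction T with
  | leaf => simp [numLeaves]
  | node l r ihl ihr => simp [numLeaves]; omega

lemma addrs_length (T : BTree) : T.addrs.length = T.numLeaves := by
  induction T with
  | leaf => rfl
  | node l r ihl ihr => simp [addrs, numLeaves, ihl, ihr]

lemma addr_node_left (L R : BTree) (i : ℕ) (h : i < L.numLeaves) :
    (node L R).addr i = false :: L.addr i := by
  have h' : i < (L.addrs.map (fun w => false :: w)).length := by
    simp [addrs_length]; exact h
  have h'' : i < L.addrs.length := by simpa [addrs_length] using h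
  rw [addr, addrs, List.getD_append _ _ _ _ h', List.getD_eq_getElem _ _ h',
    List.getElem_map, addr, List.getD_eq_getElem _ _ h'']

lemma addr_node_right (L R : BTree) (i : ℕ) (h1 : L.numLeaves ≤ i)
    (h2 : i < (node L R).numLeaves) :
    (node L R).addr i = true :: R.addr (i - L.numLeaves) := by
  have hlen : (L.addrs.map (fun w => false :: w)).length = L.numLeaves := by
    simp [addrs_length]
  have h' : (L.addrs.map (fun w => false :: w)).length ≤ i := by rw [hlen]; exact h1
  have h'' : i - L.numLeaves < (R.addrs.map (fun w => true :: w)).length := by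
    simp [addrs_length]
    have : (node L R).numLeaves = L.numLeaves + R.numLeaves := rfl
    omega
  have h3 : i - L.numLeaves < R.addrs.length := by simpa [addrs_length] using h''
  rw [addr, addrs, List.getD_append_right _ _ _ _ h', hlen, List.getD_eq_getElem _ _ h'',
    List.getElem_map, addr, List.getD_eq_getElem _ _ h3]

lemma rd_node_left (L R : BTree) (i : ℕ) (h : i < L.numLeaves) :
    (node L R).rd i = L.rd i := by
  simp [rd, addr_node_left L R i h]

lemma ld_node_left (L R : BTree) (i : ℕ) (h : i < L.numLeaves) :
    (node L R).ld i = L.ld i + 1 := by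
  simp [ld, addr_node_left L R i h]

lemma rd_node_right (L R : BTree) (i : ℕ) (h1 : L.numLeaves ≤ i)
    (h2 : i < (node L R).numLeaves) :
    (node L R).rd i = R.rd (i - L.numLeaves) + 1 := by
  simp [rd, addr_node_right L R i h1 h2]

lemma ld_node_right (L R : BTree) (i : ℕ) (h1 : L.numLeaves ≤ i)
    (h2 : i < (node L R).numLeaves) :
    (node L R).ld i = R.ld (i - L.numLeaves) := by
  simp [ld, addr_node_right L R i h1 h2]

lemma rd_zero (T : BTree) : T.rd 0 = 0 := by
  induction T with
  | leaf => rfl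
  | node L R ihl ihr =>
    rw [rd_node_left L R 0 L.numLeaves_pos]
    exact ihl

lemma rd_pos (T : BTree) (k : ℕ) (h1 : 0 < k) (h2 : k < T.numLeaves) : 0 < T.rd k := by
  induction T generalizing k with
  | leaf => simp [numLeaves] at h2; omega
  | node L R ihl ihr =>
    by_cases hk : k < L.numLeaves
    · rw [rd_node_left L R k hk]; exact ihl k h1 hk
    · rw [rd_node_right L R k (by omega) h2]; omega

/-- The key structural lemma: the left depth of leaf `i` equals the number of
indices `j > i` at which `rd` attains a new minimum over the interval `(i, j]`.
In particular it is determined by the values `rd j` for `j > i` together with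
the number of leaves. -/
lemma ld_eq_card (T : BTree) (i : ℕ) (hi : i < T.numLeaves) :
    T.ld i = ((Finset.Ioo i T.numLeaves).filter
      (fun j => ∀ k ∈ Finset.Ioc i j, T.rd j ≤ T.rd k)).card := by
  induction T generalizing i with
  | leaf =>
    have : i = 0 := by simpa [numLeaves] using hi
    subst this
    have he : Finset.Ioo 0 leaf.numLeaves = ∅ := by decide
    rw [he]
    simp [ld, addr, addrs]
  | node L R ihL ihR =>
    have hmn : (node L R).numLeaves = L.numLeaves + R.numLeaves := rfl
    by_cases hcase : i < L.numLeaves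
    · -- i is in the left subtree
      rw [ld_node_left L R i hcase, ihL i hcase]
      have hset : ((Finset.Ioo i (node L R).numLeaves).filter
            (fun j => ∀ k ∈ Finset.Ioc i j, (node L R).rd j ≤ (node L R).rd k))
          = insert L.numLeaves ((Finset.Ioo i L.numLeaves).filter
            (fun j => ∀ k ∈ Finset.Ioc i j, L.rd j ≤ L.rd k)) := by
        ext j
        simp only [Finset.mem_filter, Finset.mem_insert, Finset.mem_Ioo, Finset.mem_Ioc]
        constructor
        · rintro ⟨⟨hij, hjn⟩, hall⟩
          rcases lt_trichotomy j L.numLeaves with hjm | hjm | hjm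
          · right
            refine ⟨⟨hij, hjm⟩, fun k hk => ?_⟩
            have h1 := hall k hk
            rwa [rd_node_left L R j hjm, rd_node_left L R k (by omega)] at h1
          · exact Or.inl hjm
          · exfalso
            have h1 := hall L.numLeaves ⟨by omega, by omega⟩
            rw [rd_node_right L R j (by omega) hjn,
              rd_node_right L R L.numLeaves (le_refl _) (by omega)] at h1
            simp [Nat.sub_self, rd_zero] at h1
            have := R.rd_pos (j - L.numLeaves) (by omega) (by omega)
            omega
        · rintro (rfl | ⟨⟨hij, hjm⟩, hall⟩)
          · refine ⟨⟨hcase, by have := R.numLeaves_pos; omega⟩, fun k hk => ?_⟩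
            rw [rd_node_right L R L.numLeaves (le_refl _)
              (by have := R.numLeaves_pos; omega)]
            simp only [Nat.sub_self, rd_zero]
            rcases eq_or_lt_of_le hk.2 with rfl | hkm
            · rw [rd_node_right L R L.numLeaves (le_refl _)
                (by have := R.numLeaves_pos; omega)]
              simp [Nat.sub_self, rd_zero]
            · rw [rd_node_left L R k hkm]
              have := L.rd_pos k (by omega) hkm
              omega
          · refine ⟨⟨hij, by omega⟩, fun k hk => ?_⟩
            rw [rd_node_left L R j hjm, rd_node_left L R k (by omega)]
            exact hall k hk
      rw [hset, Finset.card_insert_of_notMem (by simp)]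
    · -- i is in the right subtree
      push_neg at hcase
      rw [ld_node_right L R i hcase hi, ihR (i - L.numLeaves) (by omega)]
      have hmap : ((Finset.Ioo i (node L R).numLeaves).filter
            (fun j => ∀ k ∈ Finset.Ioc i j, (node L R).rd j ≤ (node L R).rd k))
          = ((Finset.Ioo (i - L.numLeaves) R.numLeaves).filter
            (fun j => ∀ k ∈ Finset.Ioc (i - L.numLeaves) j, R.rd j ≤ R.rd k)).image
            (· + L.numLeaves) := by
        ext j
        simp only [Finset.mem_filter, Finset.mem_image, Finset.mem_Ioo, Finset.mem_Ioc]
        constructor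
        · rintro ⟨⟨hij, hjn⟩, hall⟩
          refine ⟨j - L.numLeaves, ⟨⟨by omega, by omega⟩, fun k hk => ?_⟩, by omega⟩
          have h1 := hall (k + L.numLeaves) ⟨by omega, by omega⟩
          rwa [rd_node_right L R j (by omega) hjn,
            rd_node_right L R (k + L.numLeaves) (by omega) (by omega),
            Nat.add_sub_cancel, add_le_add_iff_right] at h1
        · rintro ⟨a, ⟨⟨hia, han⟩, hall⟩, rfl⟩
          refine ⟨⟨by omega, by omega⟩, fun k hk => ?_⟩
          have hkm : L.numLeaves ≤ k := by omega
          rw [rd_node_right L R (a + L.numLeaves) (by omega) (by omega),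
            rd_node_right L R k hkm (by omega), Nat.add_sub_cancel,
            add_le_add_iff_right]
          exact hall (k - L.numLeaves) ⟨by omega, by omega⟩
      rw [hmap, Finset.card_image_of_injective _ (add_left_injective _)]

end BTree

/-- For distinct binary trees with `n` leaves, at the greatest index where the
right depths differ, the left depths coincide. -/
theorem stmt3 (T T' : BTree) (n i : ℕ)
    (hT : T.numLeaves = n) (hT' : T'.numLeaves = n) (hne : T ≠ T')
    (hi : i < n) (hdiff : T.rd i ≠ T'.rd i)
    (hgreatest : ∀ j, i < j → j < n → T.rd j = T'.rd j) :
    T.ld i = T'.ld i := by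
  subst hT
  have key1 := T.ld_eq_card i hi
  have key2 := T'.ld_eq_card i (hT' ▸ hi)
  rw [key1, key2, hT']
  congr 1
  apply Finset.filter_congr
  intro j hj
  simp only [Finset.mem_Ioo] at hj
  have hrj : T.rd j = T'.rd j := hgreatest j hj.1 hj.2
  constructor <;> intro h k hk <;> have hk' := Finset.mem_Ioc.mp hk <;>
    have hrk : T.rd k = T'.rd k := hgreatest k hk'.1 (by omega)
  · rw [← hrj, ← hrk]; exact h k hk
  · rw [hrj, hrk]; exact h k hk
end

section
/- Let 0 < p < 1 be a real number. If T and T' are binary trees with n leaves such that p^{ld_T(i)} (1−p)^{rd_T(i)} = p^{ld_{T'}(i)} (1−p)^{rd_{T'}(i)} for all i = 1,...,n, then T = T'. -/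
namespace BTreeAux

open BTree

/-- Probability of a leaf address. -/
noncomputable def P (p : ℝ) (w : List Bool) : ℝ :=
  p ^ (w.count false) * (1 - p) ^ (w.count true)

lemma P_nil (p : ℝ) : P p [] = 1 := by simp [P]

lemma P_false (p : ℝ) (w : List Bool) : P p (false :: w) = p * P p w := by
  simp [P, List.count_cons, pow_succ]; ring

lemma P_true (p : ℝ) (w : List Bool) : P p (true :: w) = (1 - p) * P p w := by
  simp [P, List.count_cons, pow_succ]; ring

lemma P_pos {p : ℝ} (hp0 : 0 < p) (hp1 : p < 1) (w : List Bool) : 0 < P p w :=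
  mul_pos (pow_pos hp0 _) (pow_pos (by linarith) _)

lemma one_le_numLeaves (T : BTree) : 1 ≤ T.numLeaves := by
  induction T with
  | leaf => simp [numLeaves]
  | node l r ihl ihr => simp [numLeaves]; omega

lemma addrs_length (T : BTree) : T.addrs.length = T.numLeaves := by
  induction T with
  | leaf => simp [addrs, numLeaves]
  | node l r ihl ihr => simp [addrs, numLeaves, ihl, ihr]

lemma addr_node_left (L R : BTree) {i : ℕ} (h : i < L.numLeaves) :
    (node L R).addr i = false :: L.addr i := by
  have h1 : i < L.addrs.length := by rw [addrs_length]; exact h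
  have h2 : i < (L.addrs.map (fun w => false :: w)).length := by simpa using h1
  rw [addr, addr, addrs, List.getD_eq_getElem _ _ (by simp [addrs_length]; omega),
    List.getD_eq_getElem _ _ h1, List.getElem_append_left h2, List.getElem_map]

lemma addr_node_right (L R : BTree) {i : ℕ} (h : i < R.numLeaves) :
    (node L R).addr (L.numLeaves + i) = true :: R.addr i := by
  have h1 : i < R.addrs.length := by rw [addrs_length]; exact h
  have hlen : (L.addrs.map (fun w => false :: w)).length = L.numLeaves := by
    simp [addrs_length]
  rw [addr, addr, addrs, List.getD_eq_getElem _ _ (by simp [addrs_length]; omega),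
    List.getD_eq_getElem _ _ h1,
    List.getElem_append_right (by omega)]
  simp [hlen]

lemma sum_P (p : ℝ) (T : BTree) :
    ∑ i ∈ Finset.range T.numLeaves, P p (T.addr i) = 1 := by
  induction T with
  | leaf => simp [numLeaves, addr, addrs, P_nil]
  | node L R ihL ihR =>
    have : (node L R).numLeaves = L.numLeaves + R.numLeaves := rfl
    rw [this, Finset.sum_range_add]
    have h1 : ∑ i ∈ Finset.range L.numLeaves, P p ((node L R).addr i)
        = p * ∑ i ∈ Finset.range L.numLeaves, P p (L.addr i) := by
      rw [Finset.mul_sum]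
      refine Finset.sum_congr rfl fun i hi => ?_
      rw [addr_node_left L R (Finset.mem_range.mp hi), P_false]
    have h2 : ∑ i ∈ Finset.range R.numLeaves, P p ((node L R).addr (L.numLeaves + i))
        = (1 - p) * ∑ i ∈ Finset.range R.numLeaves, P p (R.addr i) := by
      rw [Finset.mul_sum]
      refine Finset.sum_congr rfl fun i hi => ?_
      rw [addr_node_right L R (Finset.mem_range.mp hi), P_true]
    rw [h1, h2, ihL, ihR]; ring

/-- If the first `node L R` leaf probabilities agree with those of `node L' R'`,
then `L` does not have fewer leaves than `L'`. -/
lemma not_lt_aux {p : ℝ} (hp0 : 0 < p) (hp1 : p < 1) (L R L' R' : BTree)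
    (h : ∀ i < (node L R).numLeaves,
      P p ((node L R).addr i) = P p ((node L' R').addr i)) :
    ¬ L.numLeaves < L'.numLeaves := by
  intro hlt
  have hm : L.numLeaves ≤ (node L R).numLeaves := by
    have := one_le_numLeaves R
    show L.numLeaves ≤ L.numLeaves + R.numLeaves
    omega
  have hsum : ∑ i ∈ Finset.range L.numLeaves, P p ((node L R).addr i) = p := by
    have : ∑ i ∈ Finset.range L.numLeaves, P p ((node L R).addr i)
        = p * ∑ i ∈ Finset.range L.numLeaves, P p (L.addr i) := by
      rw [Finset.mul_sum]
      exact Finset.sum_congr rfl fun i hi => by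
        rw [addr_node_left L R (Finset.mem_range.mp hi), P_false]
    rw [this, sum_P, mul_one]
  have hsum' : ∑ i ∈ Finset.range L.numLeaves, P p ((node L' R').addr i)
      = p * ∑ i ∈ Finset.range L.numLeaves, P p (L'.addr i) := by
    rw [Finset.mul_sum]
    exact Finset.sum_congr rfl fun i hi => by
      rw [addr_node_left L' R' (lt_trans (Finset.mem_range.mp hi) hlt), P_false]
  have heq : ∑ i ∈ Finset.range L.numLeaves, P p ((node L R).addr i)
      = ∑ i ∈ Finset.range L.numLeaves, P p ((node L' R').addr i) :=
    Finset.sum_congr rfl fun i hi => h i (lt_of_lt_of_le (Finset.mem_range.mp hi) hm)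
  have hlt2 : ∑ i ∈ Finset.range L.numLeaves, P p (L'.addr i)
      < ∑ i ∈ Finset.range L'.numLeaves, P p (L'.addr i) := by
    apply Finset.sum_lt_sum_of_subset (Finset.range_subset_range.mpr (le_of_lt hlt))
      (i := L.numLeaves) (by simpa using hlt) (by simp)
      (P_pos hp0 hp1 _)
    intro j _ _
    exact le_of_lt (P_pos hp0 hp1 _)
  rw [sum_P] at hlt2
  have : p * ∑ i ∈ Finset.range L.numLeaves, P p (L'.addr i) < p * 1 :=
    (mul_lt_mul_iff_right₀ hp0).mpr hlt2
  rw [mul_one] at this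
  rw [hsum, hsum'] at heq
  linarith

lemma key {p : ℝ} (hp0 : 0 < p) (hp1 : p < 1) :
    ∀ T T' : BTree, T.numLeaves = T'.numLeaves →
      (∀ i < T.numLeaves, P p (T.addr i) = P p (T'.addr i)) → T = T' := by
  intro T
  induction T with
  | leaf =>
    intro T' hn _
    cases T' with
    | leaf => rfl
    | node l r =>
      exfalso
      have h1 := one_le_numLeaves l
      have h2 := one_le_numLeaves r
      have : (1 : ℕ) = l.numLeaves + r.numLeaves := hn
      omega
  | node L R ihL ihR =>
    intro T' hn h
    cases T' with
    | leaf =>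
      exfalso
      have h1 := one_le_numLeaves L
      have h2 := one_le_numLeaves R
      have : L.numLeaves + R.numLeaves = (1 : ℕ) := hn
      omega
    | node L' R' =>
      have hm : L.numLeaves = L'.numLeaves := by
        have h1 := not_lt_aux hp0 hp1 L R L' R' h
        have h2 := not_lt_aux hp0 hp1 L' R' L R (fun i hi => (h i (by rwa [hn])).symm)
        omega
      have hr : R.numLeaves = R'.numLeaves := by
        have : L.numLeaves + R.numLeaves = L'.numLeaves + R'.numLeaves := hn
        omega
      have hL : L = L' := by
        refine ihL L' hm fun i hi => ?_
        have hi2 : i < (node L R).numLeaves := by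
          have := one_le_numLeaves R
          show i < L.numLeaves + R.numLeaves
          omega
        have := h i hi2
        rw [addr_node_left L R hi, addr_node_left L' R' (hm ▸ hi), P_false, P_false] at this
        exact mul_left_cancel₀ (ne_of_gt hp0) this
      have hR : R = R' := by
        refine ihR R' hr fun j hj => ?_
        have hj2 : L.numLeaves + j < (node L R).numLeaves := by
          show L.numLeaves + j < L.numLeaves + R.numLeaves
          omega
        have := h (L.numLeaves + j) hj2
        rw [addr_node_right L R hj, hm, addr_node_right L' R' (hr ▸ hj),
          P_true, P_true] at this
        exact mul_left_cancel₀ (by linarith : (1 : ℝ) - p ≠ 0) this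
      rw [hL, hR]

end BTreeAux

/-- A binary tree is uniquely determined by its leaf probabilities. -/
theorem stmt6 (p : ℝ) (hp0 : 0 < p) (hp1 : p < 1) (T T' : BTree) (n : ℕ)
    (hT : T.numLeaves = n) (hT' : T'.numLeaves = n)
    (h : ∀ i < n, p ^ T.ld i * (1 - p) ^ T.rd i = p ^ T'.ld i * (1 - p) ^ T'.rd i) :
    T = T' := by
  subst hT
  exact BTreeAux.key hp0 hp1 T T' (by omega) fun i hi => h i hi
end

section
/- Let A = (A, ∘) with x ∘ y = φ(x) + φ(y) for an automorphism φ of a group (A,+) of order k. Then A satisfies a bracketing identity t ≈ t' if and only if d_T(i) ≡ d_{T'}(i) (mod k) for all leaves i, where T, T' are the binary trees of t, t'. -/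
/-- Evaluation of the bracketing corresponding to a binary tree, with the
variables `f k, f (k+1), ...` plugged in at the leaves, left to right. -/
def BTree.evalAux {A : Type*} (op : A → A → A) (f : ℕ → A) : BTree → ℕ → A
  | .leaf, k => f k
  | .node l r, k => op (l.evalAux op f k) (r.evalAux op f (k + l.numLeaves))

/-- Term operation induced on `A` by the bracketing corresponding to `T`. -/
def BTree.eval {A : Type*} (op : A → A → A) (T : BTree) (f : ℕ → A) : A :=
  T.evalAux op f 0

/-- `φ_w` for a word `w` over `{0,1}`: `φ_ε = id`, `φ_{0w} = φ₀ ∘ φ_w`, `φ_{1w} = φ₁ ∘ φ_w`. -/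
def phiWord {A : Type*} (φ₀ φ₁ : A → A) : List Bool → A → A
  | [] => id
  | c :: w => (if c then φ₁ else φ₀) ∘ phiWord φ₀ φ₁ w

namespace BTree

lemma addr_node_left_s11 (l r : BTree) {i : ℕ} (h : i < l.numLeaves) :
    (node l r).addr i = false :: l.addr i := by
  have h2 : i < l.addrs.length := by simpa [addrs_length] using h
  simp only [addr, addrs]
  rw [List.getD_append _ _ _ _ (by simpa using h2), List.getD_eq_getElem?_getD,
    List.getD_eq_getElem?_getD, List.getElem?_map, List.getElem?_eq_getElem h2]
  simp

lemma addr_node_right_s11 (l r : BTree) {j : ℕ} (h : j < r.numLeaves) :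
    (node l r).addr (l.numLeaves + j) = true :: r.addr j := by
  have h2 : j < r.addrs.length := by simpa [addrs_length] using h
  simp only [addr, addrs]
  rw [List.getD_append_right _ _ _ _ (by simp [addrs_length])]
  have e : l.numLeaves + j - (l.addrs.map (fun w => false :: w)).length = j := by
    simp [addrs_length]
  rw [e, List.getD_eq_getElem?_getD, List.getD_eq_getElem?_getD, List.getElem?_map,
    List.getElem?_eq_getElem h2]
  simp

lemma depth_node_left (l r : BTree) {i : ℕ} (h : i < l.numLeaves) :
    (node l r).depth i = l.depth i + 1 := by
  simp [depth, addr_node_left_s11 l r h]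

lemma depth_node_right (l r : BTree) {j : ℕ} (h : j < r.numLeaves) :
    (node l r).depth (l.numLeaves + j) = r.depth j + 1 := by
  simp [depth, addr_node_right_s11 l r h]

end BTree

private lemma list_sum_single {A : Type*} [AddMonoid A] (g : ℕ → A) (i : ℕ)
    (h0 : ∀ j, j ≠ i → g j = 0) :
    ∀ n, i < n → ((List.range n).map g).sum = g i := by
  intro n
  induction n with
  | zero => omega
  | succ n ih =>
    intro hi
    rw [List.range_succ, List.map_append, List.sum_append]
    rcases Nat.lt_or_ge i n with h | h
    · rw [ih h]
      have : g n = 0 := h0 n (by omega)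
      simp [this]
    · have hin : i = n := by omega
      subst hin
      have : ((List.range i).map g).sum = 0 := by
        apply List.sum_eq_zero
        intro x hx
        simp only [List.mem_map, List.mem_range] at hx
        obtain ⟨j, hj, rfl⟩ := hx
        exact h0 j (by omega)
      simp [this]

private lemma evalAux_eq {A : Type*} [AddGroup A] (φ : AddAut A) (f : ℕ → A) :
    ∀ (T : BTree) (s : ℕ),
      T.evalAux (fun x y => φ x + φ y) f s
        = ((List.range T.numLeaves).map (fun i => (T.depth i • φ) (f (s + i)))).sum := by
  intro T
  induction T with
  | leaf =>
    intro s
    simp [BTree.evalAux, BTree.numLeaves, BTree.depth, BTree.addr, BTree.addrs, List.range_succ]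
  | node l r ihl ihr =>
    intro s
    show φ (l.evalAux _ f s) + φ (r.evalAux _ f (s + l.numLeaves)) = _
    rw [ihl, ihr, map_list_sum φ, map_list_sum φ]
    have hnode : (BTree.node l r).numLeaves = l.numLeaves + r.numLeaves := rfl
    rw [hnode, List.range_add, List.map_append, List.sum_append, List.map_map, List.map_map, List.map_map]
    congr 1
    · congr 1
      apply List.map_congr_left
      intro i hi
      simp only [List.mem_range] at hi
      simp only [Function.comp_apply, BTree.depth_node_left l r hi, succ_nsmul' φ]
      rfl
    · congr 1
      apply List.map_congr_left
      intro j hj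
      simp only [List.mem_range] at hj
      simp only [Function.comp_apply, BTree.depth_node_right l r hj, succ_nsmul' φ]
      have : s + (l.numLeaves + j) = s + l.numLeaves + j := by omega
      rw [this]
      rfl

/-- If `x ∘ y = φ(x) + φ(y)` with `φ` of order `k`, then `t ≈ t'` holds iff the
depth sequences of the two trees agree modulo `k`. -/
theorem stmt11 (A : Type*) [AddGroup A] (φ : AddAut A) (k : ℕ)
    (hk : addOrderOf φ = k) (hk0 : 0 < k)
    (T T' : BTree) (n : ℕ) (hT : T.numLeaves = n) (hT' : T'.numLeaves = n) :
    (∀ f : ℕ → A, T.eval (fun x y => φ x + φ y) f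
        = T'.eval (fun x y => φ x + φ y) f) ↔
      ∀ i < n, Nat.ModEq k (T.depth i) (T'.depth i) := by
  constructor
  · intro h i hi
    have key : ∀ a : A, (T.depth i • φ) a = (T'.depth i • φ) a := by
      intro a
      have hf := h (fun j => if j = i then a else 0)
      rw [BTree.eval, BTree.eval, evalAux_eq, evalAux_eq, hT, hT'] at hf
      have e1 : ((List.range n).map
          (fun j => (T.depth j • φ) ((fun j => if j = i then a else 0) (0 + j)))).sum
          = (T.depth i • φ) a := by
        rw [list_sum_single _ i _ n hi]
        · simp
        · intro j hj; simp [Nat.zero_add, hj]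
      have e2 : ((List.range n).map
          (fun j => (T'.depth j • φ) ((fun j => if j = i then a else 0) (0 + j)))).sum
          = (T'.depth i • φ) a := by
        rw [list_sum_single _ i _ n hi]
        · simp
        · intro j hj; simp [Nat.zero_add, hj]
      rw [e1, e2] at hf
      exact hf
    have : (T.depth i • φ) = (T'.depth i • φ) := by
      ext a; exact key a
    rw [← hk]
    exact nsmul_eq_nsmul_iff_modEq.mp this
  · intro h f
    rw [BTree.eval, BTree.eval, evalAux_eq, evalAux_eq, hT, hT']
    congr 1
    apply List.map_congr_left
    intro i hi
    simp only [List.mem_range] at hi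
    have : (T.depth i • φ) = (T'.depth i • φ) := by
      apply nsmul_eq_nsmul_iff_modEq.mpr
      rw [hk]
      exact h i hi
    rw [this]
end
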